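/- The α-countable fractal operator F^α_B : C(I, K(ℝ)) → C(I, K(ℝ)), mapping Φ to its fractal function Φ^α, is Lipschitz continuous with Lipschitz constant 1/(1 − |α|): for all Φ, Ψ ∈ C(I, K(ℝ)), sup_{t∈I} H_d(Φ^α(t), Ψ^α(t)) ≤ (1/(1−|α|)) · sup_{t∈I} H_d(Φ(t), Ψ(t)). In particular, F^α_B is continuous. -/

import Mathlib

open Set Metric Pointwise TopologicalSpace Filter

private lemma haus_ne_top {A B : Set ℝ} (hA : IsCompact A) (hB : IsCompact B)
    (hAn : A.Nonempty) (hBn : B.Nonempty) : EMetric.hausdorffEdist A B ≠ ⊤ :=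
  Metric.hausdorffEdist_ne_top_of_nonempty_of_bounded hAn hBn hA.isBounded hB.isBounded

private lemma haus_mem {A B : Set ℝ} (hB : IsCompact B) (hBn : B.Nonempty)
    (fin : EMetric.hausdorffEdist A B ≠ ⊤) {x : ℝ} (hx : x ∈ A) :
    ∃ y ∈ B, dist x y ≤ Metric.hausdorffDist A B := by
  obtain ⟨y, hy, hyd⟩ := hB.exists_infDist_eq_dist hBn x
  exact ⟨y, hy, hyd ▸ Metric.infDist_le_hausdorffDist_of_mem hx fin⟩

private lemma haus_add {A B C D : Set ℝ} (hA : IsCompact A) (hB : IsCompact B)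
    (hC : IsCompact C) (hD : IsCompact D) (hAn : A.Nonempty) (hBn : B.Nonempty)
    (hCn : C.Nonempty) (hDn : D.Nonempty) :
    Metric.hausdorffDist (A + C) (B + D) ≤
      Metric.hausdorffDist A B + Metric.hausdorffDist C D := by
  have finAB := haus_ne_top hA hB hAn hBn
  have finBA := haus_ne_top hB hA hBn hAn
  have finCD := haus_ne_top hC hD hCn hDn
  have finDC := haus_ne_top hD hC hDn hCn
  apply Metric.hausdorffDist_le_of_mem_dist
    (add_nonneg Metric.hausdorffDist_nonneg Metric.hausdorffDist_nonneg)
  · rintro x hx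
    obtain ⟨p, hp, q, hq, rfl⟩ := Set.mem_add.1 hx
    obtain ⟨p', hp', hpd⟩ := haus_mem hB hBn finAB hp
    obtain ⟨q', hq', hqd⟩ := haus_mem hD hDn finCD hq
    exact ⟨p' + q', Set.add_mem_add hp' hq',
      (dist_add_add_le _ _ _ _).trans (add_le_add hpd hqd)⟩
  · rintro x hx
    obtain ⟨p, hp, q, hq, rfl⟩ := Set.mem_add.1 hx
    obtain ⟨p', hp', hpd⟩ := haus_mem hA hAn finBA hp
    obtain ⟨q', hq', hqd⟩ := haus_mem hC hCn finDC hq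
    refine ⟨p' + q', Set.add_mem_add hp' hq',
      (dist_add_add_le _ _ _ _).trans ?_⟩
    rw [Metric.hausdorffDist_comm (s := A), Metric.hausdorffDist_comm (s := C)] at *
    exact add_le_add hpd hqd

private lemma haus_sub {C D E : Set ℝ} (hC : IsCompact C) (hD : IsCompact D)
    (hCn : C.Nonempty) (hDn : D.Nonempty) (hEn : E.Nonempty) :
    Metric.hausdorffDist (C - E) (D - E) ≤ Metric.hausdorffDist C D := by
  have finCD := haus_ne_top hC hD hCn hDn
  have finDC := haus_ne_top hD hC hDn hCn
  apply Metric.hausdorffDist_le_of_mem_dist Metric.hausdorffDist_nonneg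
  · rintro x hx
    obtain ⟨p, hp, q, hq, rfl⟩ := Set.mem_sub.1 hx
    obtain ⟨p', hp', hpd⟩ := haus_mem hD hDn finCD hp
    exact ⟨p' - q, Set.sub_mem_sub hp' hq, by rwa [dist_sub_right]⟩
  · rintro x hx
    obtain ⟨p, hp, q, hq, rfl⟩ := Set.mem_sub.1 hx
    obtain ⟨p', hp', hpd⟩ := haus_mem hC hCn finDC hp
    refine ⟨p' - q, Set.sub_mem_sub hp' hq, ?_⟩
    rw [dist_sub_right]
    rwa [Metric.hausdorffDist_comm] at hpd

private lemma haus_smul (α : ℝ) {C D : Set ℝ} (hC : IsCompact C) (hD : IsCompact D)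
    (hCn : C.Nonempty) (hDn : D.Nonempty) :
    Metric.hausdorffDist (α • C) (α • D) ≤ |α| * Metric.hausdorffDist C D := by
  have finCD := haus_ne_top hC hD hCn hDn
  have finDC := haus_ne_top hD hC hDn hCn
  apply Metric.hausdorffDist_le_of_mem_dist
    (mul_nonneg (abs_nonneg α) Metric.hausdorffDist_nonneg)
  · rintro x ⟨p, hp, rfl⟩
    obtain ⟨p', hp', hpd⟩ := haus_mem hD hDn finCD hp
    refine ⟨α • p', Set.smul_mem_smul_set hp', ?_⟩
    rw [dist_smul₀, Real.norm_eq_abs]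
    exact mul_le_mul_of_nonneg_left hpd (abs_nonneg α)
  · rintro x ⟨p, hp, rfl⟩
    obtain ⟨p', hp', hpd⟩ := haus_mem hC hCn finDC hp
    refine ⟨α • p', Set.smul_mem_smul_set hp', ?_⟩
    rw [dist_smul₀, Real.norm_eq_abs]
    rw [Metric.hausdorffDist_comm] at hpd
    exact mul_le_mul_of_nonneg_left hpd (abs_nonneg α)

theorem stmt_7
    (a T : ℝ) (haT : a < T)
    (p : ℕ → ℝ) (hp : StrictMono p) (hpa : p 0 = a)
    (hpT : Tendsto p atTop (nhds T))
    (ζ ξ : ℕ → ℝ → ℝ) (c : ℕ → ℝ) (hc : ∀ n, c n < 1)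
    (hζlip : ∀ n, ∀ x ∈ Icc a T, ∀ y ∈ Icc a T, |ζ n x - ζ n y| ≤ c n * |x - y|)
    (hζcont : ∀ n, ContinuousOn (ζ n) (Icc a T))
    (hζinj : ∀ n, InjOn (ζ n) (Icc a T))
    (hζim : ∀ n, ζ n '' Icc a T = Icc (p n) (p (n + 1)))
    (hζend : ∀ n, (ζ n a = p n ∧ ζ n T = p (n + 1)) ∨ (ζ n a = p (n + 1) ∧ ζ n T = p n))
    (hξ : ∀ n, ∀ y ∈ Icc (p n) (p (n + 1)), ξ n y ∈ Icc a T ∧ ζ n (ξ n y) = y)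
    (α : ℝ) (hα : |α| < 1)
    (B : ℝ → NonemptyCompacts ℝ) (hB : ContinuousOn B (Icc a T))
    (Φ Ψ Φα Ψα : ℝ → NonemptyCompacts ℝ)
    (hΦ : ContinuousOn Φ (Icc a T)) (hΨ : ContinuousOn Ψ (Icc a T))
    (hΦα : ContinuousOn Φα (Icc a T)) (hΨα : ContinuousOn Ψα (Icc a T))
    (hΦαeq : ∀ n, ∀ t ∈ Icc (p n) (p (n + 1)),
      (Φα t : Set ℝ) = (Φ t : Set ℝ) + α • ((Φα (ξ n t) : Set ℝ) - (B (ξ n t) : Set ℝ)))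
    (hΨαeq : ∀ n, ∀ t ∈ Icc (p n) (p (n + 1)),
      (Ψα t : Set ℝ) = (Ψ t : Set ℝ) + α • ((Ψα (ξ n t) : Set ℝ) - (B (ξ n t) : Set ℝ))) :
    ⨆ t : ↥(Icc a T), dist (Φα ↑t) (Ψα ↑t) ≤
      (1 - |α|)⁻¹ * ⨆ t : ↥(Icc a T), dist (Φ ↑t) (Ψ ↑t) := by
  have hα1 : 0 < 1 - |α| := by linarith
  have hne : (Icc a T).Nonempty := ⟨a, le_refl a, haT.le⟩
  have : Nonempty ↥(Icc a T) := hne.to_subtype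
  set g : ℝ → ℝ := fun t => dist (Φα t) (Ψα t) with hgdef
  set f : ℝ → ℝ := fun t => dist (Φ t) (Ψ t) with hfdef
  have hgcont : ContinuousOn g (Icc a T) := continuous_dist.comp_continuousOn (hΦα.prodMk hΨα)
  have hfcont : ContinuousOn f (Icc a T) := continuous_dist.comp_continuousOn (hΦ.prodMk hΨ)
  obtain ⟨t0, ht0, ht0max⟩ := isCompact_Icc.exists_isMaxOn hne hgcont
  obtain ⟨s0, hs0, hs0max⟩ := isCompact_Icc.exists_isMaxOn hne hfcont
  have hSbdd : BddAbove (Set.range fun t : ↥(Icc a T) => g ↑t) :=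
    ⟨g t0, by rintro _ ⟨t, rfl⟩; exact ht0max t.2⟩
  have hMbdd : BddAbove (Set.range fun t : ↥(Icc a T) => f ↑t) :=
    ⟨f s0, by rintro _ ⟨t, rfl⟩; exact hs0max t.2⟩
  set S := ⨆ t : ↥(Icc a T), g ↑t with hSdef
  set M := ⨆ t : ↥(Icc a T), f ↑t with hMdef
  have hgS : ∀ t ∈ Icc a T, g t ≤ S := fun t ht => le_ciSup hSbdd ⟨t, ht⟩
  have hfM : ∀ t ∈ Icc a T, f t ≤ M := fun t ht => le_ciSup hMbdd ⟨t, ht⟩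
  have hpT' : ∀ n, p n ≤ T := fun n => hp.monotone.ge_of_tendsto hpT n
  have hpmem : ∀ n, p n ∈ Icc a T := fun n => ⟨hpa ▸ hp.monotone (Nat.zero_le n), hpT' n⟩
  -- pointwise bound on each subinterval
  have key : ∀ n, ∀ t ∈ Icc (p n) (p (n + 1)), g t ≤ f t + |α| * S := by
    intro n t ht
    obtain ⟨hξmem, -⟩ := hξ n t ht
    set C : Set ℝ := (Φα (ξ n t) : Set ℝ) with hCdef
    set D : Set ℝ := (Ψα (ξ n t) : Set ℝ) with hDdef
    set E : Set ℝ := (B (ξ n t) : Set ℝ) with hEdef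
    have hgt : g t = Metric.hausdorffDist ((Φα t : Set ℝ)) ((Ψα t : Set ℝ)) :=
      NonemptyCompacts.dist_eq
    have hft : f t = Metric.hausdorffDist ((Φ t : Set ℝ)) ((Ψ t : Set ℝ)) :=
      NonemptyCompacts.dist_eq
    have hCE : IsCompact (C - E) := by
      rw [sub_eq_add_neg]; exact (Φα (ξ n t)).isCompact.add (B (ξ n t)).isCompact.neg
    have hDE : IsCompact (D - E) := by
      rw [sub_eq_add_neg]; exact (Ψα (ξ n t)).isCompact.add (B (ξ n t)).isCompact.neg
    have hCEn : (C - E).Nonempty := (Φα (ξ n t)).nonempty.sub (B (ξ n t)).nonempty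
    have hDEn : (D - E).Nonempty := (Ψα (ξ n t)).nonempty.sub (B (ξ n t)).nonempty
    calc g t = Metric.hausdorffDist ((Φ t : Set ℝ) + α • (C - E))
          ((Ψ t : Set ℝ) + α • (D - E)) := by rw [hgt, hΦαeq n t ht, hΨαeq n t ht]
      _ ≤ Metric.hausdorffDist ((Φ t : Set ℝ)) ((Ψ t : Set ℝ)) +
          Metric.hausdorffDist (α • (C - E)) (α • (D - E)) :=
            haus_add (Φ t).isCompact (Ψ t).isCompact (hCE.smul α) (hDE.smul α)
              (Φ t).nonempty (Ψ t).nonempty (hCEn.smul_set) (hDEn.smul_set)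
      _ ≤ f t + |α| * Metric.hausdorffDist (C - E) (D - E) := by
            rw [← hft]
            exact add_le_add_right (haus_smul α hCE hDE hCEn hDEn) _
      _ ≤ f t + |α| * Metric.hausdorffDist C D := by
            refine add_le_add_right (mul_le_mul_of_nonneg_left ?_ (abs_nonneg α)) _
            exact haus_sub (Φα (ξ n t)).isCompact (Ψα (ξ n t)).isCompact
              (Φα (ξ n t)).nonempty (Ψα (ξ n t)).nonempty (B (ξ n t)).nonempty
      _ = f t + |α| * g (ξ n t) := by rw [hgdef]; simp [NonemptyCompacts.dist_eq, hCdef, hDdef]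
      _ ≤ f t + |α| * S := add_le_add_right
            (mul_le_mul_of_nonneg_left (hgS _ hξmem) (abs_nonneg α)) _
  have keyS : S ≤ M + |α| * S := by
    refine ciSup_le fun ⟨t, ht⟩ => ?_
    rcases lt_or_eq_of_le ht.2 with htT | htT
    · have hex : ∃ n, t < p n := (hpT.eventually (eventually_gt_nhds htT)).exists
      rcases hn : Nat.find hex with _ | m
      · exfalso
        have := Nat.find_spec hex
        rw [hn, hpa] at this
        exact absurd ht.1 (not_le.2 this)
      · have h1 : t < p (m + 1) := hn ▸ Nat.find_spec hex
        have h2 : p m ≤ t := not_lt.1 (Nat.find_min hex (hn ▸ m.lt_succ_self))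
        exact (key m t ⟨h2, h1.le⟩).trans (add_le_add_left (hfM t ht) _)
    · show g t ≤ M + |α| * S
      rw [htT]
      have hpin : Tendsto p atTop (nhdsWithin T (Icc a T)) := by
        rw [tendsto_nhdsWithin_iff]
        exact ⟨hpT, Eventually.of_forall hpmem⟩
      have hgt : Tendsto (fun n => g (p n)) atTop (nhds (g T)) :=
        (hgcont T ⟨haT.le, le_rfl⟩).tendsto.comp hpin
      refine le_of_tendsto hgt (Eventually.of_forall fun n => ?_)
      exact (key n (p n) ⟨le_rfl, (hp n.lt_succ_self).le⟩).trans
        (add_le_add_left (hfM _ (hpmem n)) _)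
  rw [inv_mul_eq_div, le_div_iff₀ hα1]
  nlinarith [keyS]
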